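/- For every α ≥ 0, λ ∈ [0,1], and t ≥ 0, it holds that λ^α · f(t)^α ≤ f(λt)^α ≤ λ^(α/2) · f(t)^α. -/

import Mathlib

theorem stmt_13 (f : ℝ → ℝ) (hf0 : f 0 = 0) (hodd : ∀ t : ℝ, f (-t) = -f t)
    (hf1 : ∀ t : ℝ, 0 ≤ t → HasDerivAt f ((1 + 2 * f t ^ 2) ^ (-(1/2) : ℝ)) t) :
    ∀ α : ℝ, 0 ≤ α → ∀ l : ℝ, 0 ≤ l → l ≤ 1 → ∀ t : ℝ, 0 ≤ t →
      l ^ α * f t ^ α ≤ f (l * t) ^ α ∧ f (l * t) ^ α ≤ l ^ (α / 2) * f t ^ α := by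
  have hcpos : ∀ s : ℝ, (0:ℝ) < 1 + 2 * f s ^ 2 := fun s => by positivity
  have hSpos : ∀ s : ℝ, (0:ℝ) < Real.sqrt (1 + 2 * f s ^ 2) := fun s =>
    Real.sqrt_pos.mpr (hcpos s)
  have hSsq : ∀ s : ℝ, Real.sqrt (1 + 2 * f s ^ 2) ^ 2 = 1 + 2 * f s ^ 2 := fun s =>
    Real.sq_sqrt (hcpos s).le
  have hf'eq : ∀ s : ℝ, ((1 + 2 * f s ^ 2) ^ (-(1/2) : ℝ)) =
      (Real.sqrt (1 + 2 * f s ^ 2))⁻¹ := by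
    intro s
    rw [Real.rpow_neg (hcpos s).le, Real.sqrt_eq_rpow]
  have hf'pos : ∀ s : ℝ, (0:ℝ) < (1 + 2 * f s ^ 2) ^ (-(1/2) : ℝ) := fun s =>
    Real.rpow_pos_of_pos (hcpos s) _
  -- f is nonnegative and monotone on [0, ∞)
  have hcont : ContinuousOn f (Set.Ici 0) := fun s hs =>
    ((hf1 s hs).continuousAt).continuousWithinAt
  have hmono : MonotoneOn f (Set.Ici 0) := by
    apply monotoneOn_of_deriv_nonneg (convex_Ici 0) hcont
    · intro s hs
      rw [interior_Ici] at hs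
      exact ((hf1 s hs.le).differentiableAt).differentiableWithinAt
    · intro s hs
      rw [interior_Ici] at hs
      rw [(hf1 s hs.le).deriv]
      exact (hf'pos s).le
  have hfnn : ∀ s : ℝ, 0 ≤ s → 0 ≤ f s := by
    intro s hs
    have := hmono Set.self_mem_Ici (Set.mem_Ici.mpr hs) hs
    rwa [hf0] at this
  -- derivative of u s = f s * sqrt (1 + 2 f s ^ 2)
  set u : ℝ → ℝ := fun s => f s * Real.sqrt (1 + 2 * f s ^ 2) with hu_def
  have hu : ∀ s : ℝ, 0 ≤ s →
      HasDerivAt u (1 + 2 * f s ^ 2 / (1 + 2 * f s ^ 2)) s := by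
    intro s hs
    have h1 : HasDerivAt (fun x => 1 + 2 * f x ^ 2)
        (2 * ((2:ℕ) * f s ^ (2-1) * ((1 + 2 * f s ^ 2) ^ (-(1/2) : ℝ)))) s :=
      (((hf1 s hs).pow 2).const_mul 2).const_add 1
    have h2 := h1.sqrt (hcpos s).ne'
    have h3 := (hf1 s hs).mul h2
    refine (show HasDerivAt u _ s from h3).congr_deriv ?_
    rw [hf'eq s]
    have hS := hSpos s
    have hSq := hSsq s
    simp only [Nat.cast_ofNat, show (2:ℕ) - 1 = 1 from rfl, pow_one]
    field_simp
    nlinarith [hS, hSq, sq_nonneg (f s)]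
  have hucont : ∀ s : ℝ, 0 ≤ s → ContinuousAt u s := fun s hs => (hu s hs).continuousAt
  -- s ≤ u s for s ≥ 0
  have hKmono : MonotoneOn (fun s => u s - s) (Set.Ici 0) := by
    apply monotoneOn_of_deriv_nonneg (convex_Ici 0)
    · exact fun s hs => ((hucont s hs).sub continuous_id.continuousAt).continuousWithinAt
    · intro s hs
      rw [interior_Ici] at hs
      have h := (hu s hs.le).sub (hasDerivAt_id s)
      exact h.differentiableAt.differentiableWithinAt
    · intro s hs
      rw [interior_Ici] at hs
      have h := (hu s hs.le).sub (hasDerivAt_id s)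
      rw [HasDerivAt.deriv (f := fun s => u s - s) h]
      have := hcpos s
      have : 0 ≤ 2 * f s ^ 2 / (1 + 2 * f s ^ 2) := by positivity
      linarith
  have hle_u : ∀ s : ℝ, 0 ≤ s → s ≤ u s := by
    intro s hs
    have h : u 0 - 0 ≤ u s - s := hKmono Set.self_mem_Ici (Set.mem_Ici.mpr hs) hs
    have h0 : u 0 = 0 := by simp [hu_def, hf0]
    rw [h0] at h
    linarith
  -- u s ≤ 2 s for s ≥ 0
  have hHmono : MonotoneOn (fun s => 2 * s - u s) (Set.Ici 0) := by
    apply monotoneOn_of_deriv_nonneg (convex_Ici 0)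
    · intro s hs
      exact (ContinuousAt.sub (by fun_prop) (hucont s hs)).continuousWithinAt
    · intro s hs
      rw [interior_Ici] at hs
      have h := ((hasDerivAt_id s).const_mul 2).sub (hu s hs.le)
      simp only [id_eq] at h
      exact h.differentiableAt.differentiableWithinAt
    · intro s hs
      rw [interior_Ici] at hs
      have h := ((hasDerivAt_id s).const_mul 2).sub (hu s hs.le)
      simp only [id_eq] at h
      rw [HasDerivAt.deriv (f := fun s => 2 * s - u s) h]
      have hc := hcpos s
      have : 2 * f s ^ 2 / (1 + 2 * f s ^ 2) ≤ 1 := by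
        rw [div_le_one hc]; linarith
      linarith
  have hu_le : ∀ s : ℝ, 0 ≤ s → u s ≤ 2 * s := by
    intro s hs
    have h : 2 * 0 - u 0 ≤ 2 * s - u s := hHmono Set.self_mem_Ici (Set.mem_Ici.mpr hs) hs
    have h0 : u 0 = 0 := by simp [hu_def, hf0]
    rw [h0] at h
    linarith
  -- pointwise derivative comparisons
  have hkey1 : ∀ s : ℝ, 0 ≤ s → s * ((1 + 2 * f s ^ 2) ^ (-(1/2) : ℝ)) ≤ f s := by
    intro s hs
    have h := hle_u s hs
    rw [hf'eq s]
    have hS := hSpos s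
    rw [mul_inv_le_iff₀ hS]
    simpa [hu_def, mul_comm] using h
  have hkey2 : ∀ s : ℝ, 0 ≤ s → f s ≤ 2 * s * ((1 + 2 * f s ^ 2) ^ (-(1/2) : ℝ)) := by
    intro s hs
    have h := hu_le s hs
    rw [hf'eq s]
    have hS := hSpos s
    rw [le_mul_inv_iff₀ hS]
    simpa [hu_def, mul_comm] using h
  -- f s / s is antitone on (0, ∞)
  have hr_anti : AntitoneOn (fun s => f s / s) (Set.Ioi 0) := by
    apply antitoneOn_of_deriv_nonpos (convex_Ioi 0)
    · exact ContinuousOn.div (fun s hs => ((hf1 s (le_of_lt hs)).continuousAt).continuousWithinAt)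
        continuousOn_id (fun s hs => ne_of_gt hs)
    · intro s hs
      rw [interior_Ioi] at hs
      have h := (hf1 s hs.le).div (hasDerivAt_id s) hs.ne'
      simp only [id_eq] at h
      exact h.differentiableAt.differentiableWithinAt
    · intro s hs
      rw [interior_Ioi] at hs
      have h := (hf1 s hs.le).div (hasDerivAt_id s) hs.ne'
      simp only [id_eq] at h
      rw [HasDerivAt.deriv (f := fun s => f s / s) h]
      apply div_nonpos_of_nonpos_of_nonneg _ (sq_nonneg _)
      have := hkey1 s hs.le
      nlinarith
  -- f s ^ 2 / s is monotone on (0, ∞)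
  have hq_mono : MonotoneOn (fun s => f s ^ 2 / s) (Set.Ioi 0) := by
    apply monotoneOn_of_deriv_nonneg (convex_Ioi 0)
    · exact ContinuousOn.div
        (fun s hs => (((hf1 s (le_of_lt hs)).pow 2).continuousAt).continuousWithinAt)
        continuousOn_id (fun s hs => ne_of_gt hs)
    · intro s hs
      rw [interior_Ioi] at hs
      have h := ((hf1 s hs.le).pow 2).div (hasDerivAt_id s) hs.ne'
      simp only [id_eq] at h
      exact h.differentiableAt.differentiableWithinAt
    · intro s hs
      rw [interior_Ioi] at hs
      have h := ((hf1 s hs.le).pow 2).div (hasDerivAt_id s) hs.ne'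
      simp only [id_eq] at h
      rw [HasDerivAt.deriv (f := fun s => f s ^ 2 / s) h]
      apply div_nonneg _ (sq_nonneg _)
      have h2 := hkey2 s hs.le
      have hfn := hfnn s hs.le
      have hd := (hf'pos s).le
      simp only [pow_one, Nat.cast_ofNat, mul_one, Pi.pow_apply]
      nlinarith
  -- main comparison inequalities
  intro α hα l hl0 hl1 t ht
  have hlt : 0 ≤ l * t := mul_nonneg hl0 ht
  have hflt : 0 ≤ f (l * t) := hfnn _ hlt
  have hft : 0 ≤ f t := hfnn t ht
  have key_low : l * f t ≤ f (l * t) := by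
    rcases eq_or_lt_of_le ht with h | hpt
    · simp [← h, hf0]
    rcases eq_or_lt_of_le hl0 with h | hpl
    · simp [← h, hf0]
    · have hltpos : 0 < l * t := mul_pos hpl hpt
      have hle : l * t ≤ t := by nlinarith
      have := hr_anti (Set.mem_Ioi.mpr hltpos) (Set.mem_Ioi.mpr hpt) hle
      rw [div_le_div_iff₀ hpt hltpos] at this
      nlinarith
  have key_high : f (l * t) ^ 2 ≤ l * f t ^ 2 := by
    rcases eq_or_lt_of_le ht with h | hpt
    · simp [← h, hf0]
    rcases eq_or_lt_of_le hl0 with h | hpl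
    · simp [← h, hf0]
    · have hltpos : 0 < l * t := mul_pos hpl hpt
      have hle : l * t ≤ t := by nlinarith
      have := hq_mono (Set.mem_Ioi.mpr hltpos) (Set.mem_Ioi.mpr hpt) hle
      rw [div_le_div_iff₀ hltpos hpt] at this
      nlinarith
  constructor
  · calc l ^ α * f t ^ α = (l * f t) ^ α := (Real.mul_rpow hl0 hft).symm
      _ ≤ f (l * t) ^ α := Real.rpow_le_rpow (mul_nonneg hl0 hft) key_low hα
  · have h1 : f (l * t) ^ α = (f (l * t) ^ 2) ^ (α / 2) := by
      rw [← Real.rpow_natCast (f (l * t)) 2, ← Real.rpow_mul hflt]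
      push_cast
      rw [show (2:ℝ) * (α / 2) = α by ring]
    have h2 : f t ^ α = (f t ^ 2) ^ (α / 2) := by
      rw [← Real.rpow_natCast (f t) 2, ← Real.rpow_mul hft]
      push_cast
      rw [show (2:ℝ) * (α / 2) = α by ring]
    rw [h1, h2, ← Real.mul_rpow hl0 (sq_nonneg _)]
    exact Real.rpow_le_rpow (sq_nonneg _) key_high (by linarith)
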